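/- Let X be a set of mutually noncollinear points (no three on a line... i.e., a cap) of size q−1, q, or q+1 in PG(2,q), q even, q ≥ 8. Then X is contained in at most one hyperoval of PG(2,q). -/

import Mathlib

open Projectivization

/-- The set of points of `PG(n-1,F)` lying on a subspace `W`. -/
def pointsOn {F : Type*} [Field F] {n : ℕ} (W : Submodule F (Fin n → F)) :
    Set (Projectivization F (Fin n → F)) :=
  {p | p.submodule ≤ W}

/-- An arc of `PG(2,q)`: every line contains at most two of its points. -/
def IsArc {F : Type*} [Field F] (X : Set (Projectivization F (Fin 3 → F))) : Prop :=
  ∀ W : Submodule F (Fin 3 → F), Module.finrank F W = 2 → (X ∩ pointsOn W).ncard ≤ 2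

/-- A hyperoval of `PG(2,q)`: a set of `q+2` points, no three collinear. -/
def IsHyperoval {F : Type*} [Field F] (q : ℕ)
    (H : Set (Projectivization F (Fin 3 → F))) : Prop :=
  H.ncard = q + 2 ∧ IsArc H

open Module
open scoped LinearAlgebra.Projectivization

section Aux

variable {F : Type*} [Field F]

theorem PG.card_proj_two (F : Type*) [Field F] [Fintype F] (U : Type*) [AddCommGroup U]
    [Module F U] [FiniteDimensional F U] (h2 : Module.finrank F U = 2) :
    Nat.card (ℙ F U) = Fintype.card F + 1 := by
  classical
  have e : (Fin 2 → F) ≃ₗ[F] U := LinearEquiv.ofFinrankEq _ _ (by simp [h2])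
  have hbij : Function.Bijective (map e.toLinearMap e.injective) := by
    refine ⟨map_injective _ e.injective, ?_⟩
    intro w
    induction' w using Projectivization.ind with v hv
    exact ⟨mk F (e.symm v) (by simp [hv]), by simp [map_mk, mk_eq_mk_iff']⟩
  rw [← Nat.card_eq_of_bijective _ hbij,
    Nat.card_congr (OnePoint.equivProjectivization F).symm]
  simp [OnePoint, Nat.card_eq_fintype_card]

theorem PG.mem_pointsOn' {n : ℕ} {W : Submodule F (Fin n → F)} {p : ℙ F (Fin n → F)} :
    p ∈ pointsOn W ↔ p.submodule ≤ W := Iff.rfl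

theorem PG.mem_pointsOn {n : ℕ} {W : Submodule F (Fin n → F)}
    {p : ℙ F (Fin n → F)} : p ∈ pointsOn W ↔ p.rep ∈ W := by
  rw [pointsOn, Set.mem_setOf_eq, submodule_eq, Submodule.span_singleton_le_iff_mem]

theorem PG.card_pointsOn [Fintype F] {n : ℕ} (W : Submodule F (Fin n → F))
    (h2 : Module.finrank F W = 2) : Nat.card (pointsOn W) = Fintype.card F + 1 := by
  classical
  have hrange : pointsOn W = Set.range (map W.subtype W.injective_subtype) := by
    ext p
    constructor
    · intro hp
      rw [PG.mem_pointsOn] at hp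
      refine ⟨mk F ⟨p.rep, hp⟩ (by simpa using rep_nonzero p), ?_⟩
      rw [map_mk]
      exact mk_rep p
    · rintro ⟨x, rfl⟩
      induction' x using Projectivization.ind with v hv
      rw [map_mk]
      show _ ∈ pointsOn W
      rw [pointsOn, Set.mem_setOf_eq, submodule_mk, Submodule.span_singleton_le_iff_mem]
      exact v.2
  rw [hrange, Nat.card_range_of_injective (map_injective W.subtype W.injective_subtype)]
  exact PG.card_proj_two F W h2

theorem PG.finrank_map_mkQ {V : Type*} [AddCommGroup V] [Module F V]
    [FiniteDimensional F V] (p W : Submodule F V) (h : p ≤ W) :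
    finrank F (W.map p.mkQ) + finrank F p = finrank F W := by
  classical
  have hr := LinearMap.finrank_range_add_finrank_ker (p.mkQ.domRestrict W)
  have hrange : LinearMap.range (p.mkQ.domRestrict W) = W.map p.mkQ := by
    ext x
    simp [LinearMap.mem_range, Submodule.mem_map]
  have hker : LinearMap.ker (p.mkQ.domRestrict W) = p.comap W.subtype := by
    ext x
    simp [LinearMap.mem_ker, Submodule.Quotient.mk_eq_zero]
  rw [hrange, hker] at hr
  rwa [(Submodule.comapSubtypeEquivOfLe h).finrank_eq] at hr

theorem PG.card_linesThrough [Fintype F] (P : ℙ F (Fin 3 → F)) :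
    Nat.card {W : Submodule F (Fin 3 → F) // finrank F W = 2 ∧ P.submodule ≤ W}
      = Fintype.card F + 1 := by
  classical
  set p := P.submodule with hp
  have hp1 : finrank F p = 1 := P.finrank_submodule
  have hq2 : finrank F ((Fin 3 → F) ⧸ p) = 2 := by
    have := Submodule.finrank_quotient_add_finrank p
    rw [hp1, Module.finrank_fin_fun] at this
    omega
  have hsur : Function.Surjective p.mkQ := Submodule.mkQ_surjective p
  have e : {S : Submodule F ((Fin 3 → F) ⧸ p) // finrank F S = 1} ≃
      {W : Submodule F (Fin 3 → F) // finrank F W = 2 ∧ p ≤ W} := by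
    refine ⟨fun S => ⟨S.1.comap p.mkQ, ?_, ?_⟩, fun W => ⟨W.1.map p.mkQ, ?_⟩, ?_, ?_⟩
    · have hle : p ≤ S.1.comap p.mkQ := by
        intro x hx
        simp [Submodule.mem_comap, (Submodule.Quotient.mk_eq_zero p).2 hx]
      have := PG.finrank_map_mkQ p (S.1.comap p.mkQ) hle
      rw [Submodule.map_comap_eq_of_surjective hsur, S.2, hp1] at this
      omega
    · intro x hx
      simp [Submodule.mem_comap, (Submodule.Quotient.mk_eq_zero p).2 hx]
    · have := PG.finrank_map_mkQ p W.1 W.2.2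
      rw [W.2.1, hp1] at this
      omega
    · intro S
      ext1
      exact Submodule.map_comap_eq_of_surjective hsur S.1
    · intro W
      ext1
      simp only [Submodule.comap_map_eq, Submodule.ker_mkQ]
      exact sup_eq_left.2 W.2.2
  rw [← Nat.card_congr e, ← Nat.card_congr (equivSubmodule F ((Fin 3 → F) ⧸ p))]
  exact PG.card_proj_two F _ hq2

/-- The span of two distinct points is a line. -/
theorem PG.finrank_sup {p q : ℙ F (Fin 3 → F)} (hpq : p ≠ q) :
    finrank F (p.submodule ⊔ q.submodule : Submodule F (Fin 3 → F)) = 2 := by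
  have h1 : finrank F p.submodule = 1 := p.finrank_submodule
  have h2 : finrank F q.submodule = 1 := q.finrank_submodule
  have hsum := Submodule.finrank_sup_add_finrank_inf_eq p.submodule q.submodule
  have hlt : p.submodule ⊓ q.submodule < p.submodule := by
    rcases lt_or_eq_of_le (inf_le_left : p.submodule ⊓ q.submodule ≤ p.submodule) with h | h
    · exact h
    · exfalso
      apply hpq
      apply submodule_injective
      exact Submodule.eq_of_le_of_finrank_eq (le_of_inf_eq h) (h1.trans h2.symm)
  have hinf : finrank F (p.submodule ⊓ q.submodule : Submodule F (Fin 3 → F)) = 0 := by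
    have := Submodule.finrank_lt_finrank_of_lt hlt
    omega
  omega

/-- Uniqueness of the line through two distinct points. -/
theorem PG.line_unique {p q : ℙ F (Fin 3 → F)} (hpq : p ≠ q)
    {W : Submodule F (Fin 3 → F)} (hW : finrank F W = 2)
    (hp : p ∈ pointsOn W) (hq : q ∈ pointsOn W) :
    W = p.submodule ⊔ q.submodule := by
  exact (Submodule.eq_of_le_of_finrank_eq (sup_le hp hq)
    (by rw [PG.finrank_sup hpq, hW])).symm

theorem PG.three_points [Fintype F] {H : Set (ℙ F (Fin 3 → F))} (hH : IsArc H)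
    {W : Submodule F (Fin 3 → F)} (hW : finrank F W = 2)
    {a b c : ℙ F (Fin 3 → F)} (hab : a ≠ b) (hac : a ≠ c) (hbc : b ≠ c)
    (ha : a ∈ H ∩ pointsOn W) (hb : b ∈ H ∩ pointsOn W) (hc : c ∈ H ∩ pointsOn W) :
    False := by
  have hsub : ({a, b, c} : Set (ℙ F (Fin 3 → F))) ⊆ H ∩ pointsOn W := by
    intro x hx
    rcases hx with rfl | rfl | rfl
    exacts [ha, hb, hc]
  haveI : Finite (ℙ F (Fin 3 → F)) := Quotient.finite _
  have hfin : (H ∩ pointsOn W).Finite := Set.toFinite _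
  have h3 : ({a, b, c} : Set (ℙ F (Fin 3 → F))).ncard = 3 := by
    rw [Set.ncard_insert_of_notMem (by simp [hab, hac]) (Set.toFinite _),
      Set.ncard_insert_of_notMem (by simp [hbc]) (Set.toFinite _), Set.ncard_singleton]
  have := Set.ncard_le_ncard hsub hfin
  have := hH W hW
  omega

variable [Fintype F]

/-- Every line through a point of a hyperoval meets it in exactly two points. -/
theorem PG.secant {q : ℕ} (hq : q = Fintype.card F) {H : Set (ℙ F (Fin 3 → F))}
    (hH : IsHyperoval q H) {P : ℙ F (Fin 3 → F)} (hP : P ∈ H)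
    {W : Submodule F (Fin 3 → F)} (hW : finrank F W = 2) (hPW : P ∈ pointsOn W) :
    (H ∩ pointsOn W).ncard = 2 := by
  classical
  haveI : Finite (ℙ F (Fin 3 → F)) := Quotient.finite _
  have hHfin : H.Finite := Set.toFinite _
  have hdiff : (H \ {P}).ncard = q + 1 := by
    rw [Set.ncard_diff_singleton_of_mem hP, hH.1]
    omega

  set L := {W' : Submodule F (Fin 3 → F) // finrank F W' = 2 ∧ P.submodule ≤ W'} with hL
  have hf : ∀ x : (H \ {P} : Set (ℙ F (Fin 3 → F))),
      finrank F (P.submodule ⊔ (x : ℙ F (Fin 3 → F)).submodule :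
        Submodule F (Fin 3 → F)) = 2 := by
    intro x
    exact PG.finrank_sup (fun h => x.2.2 (by simp [← h]))
  let f : (H \ {P} : Set (ℙ F (Fin 3 → F))) → L :=
    fun x => ⟨P.submodule ⊔ (x : ℙ F (Fin 3 → F)).submodule, hf x, le_sup_left⟩
  have hinj : Function.Injective f := by
    intro x y hxy
    by_contra hne
    have hxyne : (x : ℙ F (Fin 3 → F)) ≠ (y : ℙ F (Fin 3 → F)) :=
      fun h => hne (Subtype.ext h)
    have hWx : finrank F (P.submodule ⊔ (x : ℙ F (Fin 3 → F)).submodule :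
        Submodule F (Fin 3 → F)) = 2 := hf x
    have hxW : (x : ℙ F (Fin 3 → F)) ∈ pointsOn
        (P.submodule ⊔ (x : ℙ F (Fin 3 → F)).submodule) := PG.mem_pointsOn'.2 le_sup_right
    have hyW : (y : ℙ F (Fin 3 → F)) ∈ pointsOn
        (P.submodule ⊔ (x : ℙ F (Fin 3 → F)).submodule) := by
      have : f x = f y := hxy
      have h' : (P.submodule ⊔ (x : ℙ F (Fin 3 → F)).submodule) =
          (P.submodule ⊔ (y : ℙ F (Fin 3 → F)).submodule) := congrArg Subtype.val this
      rw [pointsOn, Set.mem_setOf_eq, h']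
      exact le_sup_right
    exact PG.three_points hH.2 hWx (fun h => x.2.2 (by simp [h]))
      (fun h => y.2.2 (by simp [h])) hxyne
      ⟨hP, PG.mem_pointsOn'.2 le_sup_left⟩ ⟨x.2.1, hxW⟩ ⟨y.2.1, hyW⟩
  -- f is surjective since both sides have cardinality q+1
  have hcards : Nat.card (H \ {P} : Set (ℙ F (Fin 3 → F))) = Nat.card L := by
    rw [Nat.card_coe_set_eq, hdiff, hL, PG.card_linesThrough, hq]
  have hsurj : Function.Surjective f := by
    haveI : Fintype (H \ {P} : Set (ℙ F (Fin 3 → F))) := Fintype.ofFinite _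
    haveI : Fintype L := Fintype.ofFinite _
    apply Function.Injective.surjective_of_finite (Fintype.equivOfCardEq ?_) hinj
    rwa [← Nat.card_eq_fintype_card, ← Nat.card_eq_fintype_card]
  obtain ⟨x, hx⟩ := hsurj ⟨W, hW, hPW⟩
  have hWeq : P.submodule ⊔ (x : ℙ F (Fin 3 → F)).submodule = W := congrArg Subtype.val hx
  have hxP : (x : ℙ F (Fin 3 → F)) ≠ P := fun h => x.2.2 (by simp [h])
  have hxW : (x : ℙ F (Fin 3 → F)) ∈ pointsOn W := by
    rw [pointsOn, Set.mem_setOf_eq, ← hWeq]; exact le_sup_right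
  refine le_antisymm (hH.2 W hW) ?_
  have hsub : ({P, (x : ℙ F (Fin 3 → F))} : Set (ℙ F (Fin 3 → F))) ⊆ H ∩ pointsOn W := by
    intro z hz
    rcases hz with rfl | rfl
    exacts [⟨hP, hPW⟩, ⟨x.2.1, hxW⟩]
  calc 2 = ({P, (x : ℙ F (Fin 3 → F))} : Set (ℙ F (Fin 3 → F))).ncard := by
          rw [Set.ncard_pair (Ne.symm hxP)]
    _ ≤ (H ∩ pointsOn W).ncard := Set.ncard_le_ncard hsub (Set.toFinite _)

end Aux

/-- An arc of size `q-1`, `q` or `q+1` in `PG(2,q)`, `q` even, `q ≥ 8`, is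
contained in at most one hyperoval. -/
theorem arc_in_at_most_one_hyperoval
    (F : Type*) [Field F] [Fintype F] (q : ℕ) (hq : q = Fintype.card F)
    (hqeven : Even q) (hq8 : 8 ≤ q)
    (X H₁ H₂ : Set (Projectivization F (Fin 3 → F)))
    (hX : IsArc X) (hcard : X.ncard = q - 1 ∨ X.ncard = q ∨ X.ncard = q + 1)
    (h₁ : IsHyperoval q H₁) (h₂ : IsHyperoval q H₂)
    (hX₁ : X ⊆ H₁) (hX₂ : X ⊆ H₂) :
    H₁ = H₂ := by
  classical
  haveI : Finite (ℙ F (Fin 3 → F)) := Quotient.finite _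
  by_contra hne
  -- find a point of H₁ not in H₂
  have hnsub : ¬ H₁ ⊆ H₂ := by
    intro hsub
    exact hne (Set.eq_of_subset_of_ncard_le hsub (by rw [h₁.1, h₂.1]) (Set.toFinite _))
  obtain ⟨P, hP₁, hP₂⟩ := Set.not_subset.1 hnsub
  -- for each x ∈ X, get the second point of H₂ on line Px, lying outside X
  have key : ∀ x : X, ∃ y : (H₂ \ X : Set (ℙ F (Fin 3 → F))),
      (y : ℙ F (Fin 3 → F)).submodule ≤ P.submodule ⊔ (x : ℙ F (Fin 3 → F)).submodule := by
    rintro ⟨x, hx⟩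
    have hxP : x ≠ P := fun h => hP₂ (h ▸ hX₂ hx)
    set W := P.submodule ⊔ x.submodule with hWdef
    have hW2 : Module.finrank F W = 2 := PG.finrank_sup (Ne.symm hxP)
    have hxW : x ∈ pointsOn W := PG.mem_pointsOn'.2 le_sup_right
    have h2 : (H₂ ∩ pointsOn W).ncard = 2 := PG.secant hq h₂ (hX₂ hx) hW2 hxW
    obtain ⟨a, b, hab, habs⟩ := Set.ncard_eq_two.1 h2
    have hxmem : x ∈ ({a, b} : Set (ℙ F (Fin 3 → F))) := habs ▸ ⟨hX₂ hx, hxW⟩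
    -- the other point
    obtain ⟨y, hy, hyx⟩ : ∃ y, y ∈ H₂ ∩ pointsOn W ∧ y ≠ x := by
      rcases hxmem with rfl | rfl
      · exact ⟨b, habs ▸ (by simp), Ne.symm hab⟩
      · exact ⟨a, habs ▸ (by simp), hab⟩
    have hyX : y ∉ X := by
      intro hyX
      have hyP : y ≠ P := fun h => hP₂ (h ▸ hy.1)
      exact PG.three_points h₁.2 hW2 (Ne.symm hxP) (Ne.symm hyP) (Ne.symm hyx)
        ⟨hP₁, PG.mem_pointsOn'.2 le_sup_left⟩ ⟨hX₁ hx, hxW⟩ ⟨hX₁ hyX, hy.2⟩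
    exact ⟨⟨y, hy.1, hyX⟩, hy.2⟩
  choose g hg using key
  have hinj : Function.Injective g := by
    intro x₁ x₂ h12
    by_contra hne'
    have hx12 : (x₁ : ℙ F (Fin 3 → F)) ≠ (x₂ : ℙ F (Fin 3 → F)) :=
      fun h => hne' (Subtype.ext h)
    set y := g x₁ with hy
    have hyP : (y : ℙ F (Fin 3 → F)) ≠ P := fun h => hP₂ (h ▸ y.2.1)
    have hxP1 : (x₁ : ℙ F (Fin 3 → F)) ≠ P := fun h => hP₂ (h ▸ hX₂ x₁.2)
    have hxP2 : (x₂ : ℙ F (Fin 3 → F)) ≠ P := fun h => hP₂ (h ▸ hX₂ x₂.2)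
    have hW1 : Module.finrank F (P.submodule ⊔ (x₁ : ℙ F (Fin 3 → F)).submodule :
        Submodule F (Fin 3 → F)) = 2 := PG.finrank_sup (Ne.symm hxP1)
    have hW2 : Module.finrank F (P.submodule ⊔ (x₂ : ℙ F (Fin 3 → F)).submodule :
        Submodule F (Fin 3 → F)) = 2 := PG.finrank_sup (Ne.symm hxP2)
    -- both lines contain P and y, with y ≠ P, hence coincide
    have e1 : (P.submodule ⊔ (x₁ : ℙ F (Fin 3 → F)).submodule : Submodule F (Fin 3 → F)) =
        P.submodule ⊔ (y : ℙ F (Fin 3 → F)).submodule :=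
      PG.line_unique (Ne.symm hyP) hW1 (PG.mem_pointsOn'.2 le_sup_left) (hg x₁)
    have e2 : (P.submodule ⊔ (x₂ : ℙ F (Fin 3 → F)).submodule : Submodule F (Fin 3 → F)) =
        P.submodule ⊔ (y : ℙ F (Fin 3 → F)).submodule :=
      PG.line_unique (Ne.symm hyP) hW2 (PG.mem_pointsOn'.2 le_sup_left) (h12 ▸ hg x₂)
    -- so x₁, x₂, P are three points of H₁ on one line
    have hx2W : (x₂ : ℙ F (Fin 3 → F)) ∈ pointsOn
        (P.submodule ⊔ (x₁ : ℙ F (Fin 3 → F)).submodule) := by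
      rw [pointsOn, Set.mem_setOf_eq, e1, ← e2]
      exact le_sup_right
    exact PG.three_points h₁.2 hW1 (Ne.symm hxP1) (Ne.symm hxP2) hx12
      ⟨hP₁, PG.mem_pointsOn'.2 le_sup_left⟩ ⟨hX₁ x₁.2, PG.mem_pointsOn'.2 le_sup_right⟩ ⟨hX₁ x₂.2, hx2W⟩
  have hcard_le : X.ncard ≤ (H₂ \ X).ncard := by
    rw [← Nat.card_coe_set_eq, ← Nat.card_coe_set_eq]
    exact Nat.card_le_card_of_injective g hinj
  have hdiff : (H₂ \ X).ncard = (q + 2) - X.ncard := by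
    rw [Set.ncard_diff hX₂ (Set.toFinite _), h₂.1]
  omega
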